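/- Let X be a nonempty compact metrisable topological space and T : X → X a homeomorphism such that the system (X, T^n) is minimal for every n ≥ 1 (i.e., for every x ∈ X the orbit {T^{nm} x : m ∈ ℤ} is dense in X). Let A ⊆ X be a set which is neither empty nor dense in X and which satisfies closure(A) = closure(interior(A)), and let z ∈ X. Suppose f : ℕ₀ → {0,1} is a sequence such that the set {n ∈ ℕ₀ : f(n) = 1 ↔ T^n z ∈ A} is thick. Then f is not weakly periodic. -/

import Mathlib

open Filter Topology

/-- The `k`-kernel of a sequence: all subsequences `n ↦ f (k^l * n + r)` with `0 ≤ r < k^l`. -/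
def kKernel {Ω : Type*} (k : ℕ) (f : ℕ → Ω) : Set (ℕ → Ω) :=
  {g | ∃ l r : ℕ, r < k ^ l ∧ g = fun n => f (k ^ l * n + r)}

/-- A sequence is `k`-automatic if its `k`-kernel is finite. -/
def IsKAutomatic {Ω : Type*} (k : ℕ) (f : ℕ → Ω) : Prop :=
  (kKernel k f).Finite

/-- A sequence `f` is weakly periodic if every restriction `n ↦ f (a n + b)` (with `a ≥ 1`)
agrees along two distinct residues `r ≠ r'` modulo some `q ≥ 1`. -/
def WeaklyPeriodic {Ω : Type*} (f : ℕ → Ω) : Prop :=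
  ∀ a b : ℕ, 0 < a → ∃ q r r' : ℕ, 0 < q ∧ r ≠ r' ∧
    ∀ n : ℕ, f (a * (q * n + r) + b) = f (a * (q * n + r') + b)

/-- A sequence is periodic (with some period `q ≥ 1`). -/
def PeriodicSeq {Ω : Type*} (f : ℕ → Ω) : Prop :=
  ∃ q : ℕ, 0 < q ∧ ∀ n : ℕ, f (n + q) = f n

/-- A set of naturals is thick if it contains arbitrarily long intervals. -/
def Thick (R : Set ℕ) : Prop := ∀ L : ℕ, ∃ a : ℕ, ∀ i < L, a + i ∈ R

/-- A set has upper Banach density zero: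
`max_M |Z ∩ [M, M+N)| / N → 0` as `N → ∞`. -/
def BanachDensityZero (Z : Set ℕ) : Prop :=
  ∀ ε : ℝ, 0 < ε → ∃ N₀ : ℕ, ∀ N : ℕ, N₀ ≤ N → ∀ M : ℕ,
    ((Z ∩ Set.Ico M (M + N)).ncard : ℝ) ≤ ε * N

/-- A set has natural density zero. -/
def NaturalDensityZero (E : Set ℕ) : Prop :=
  Filter.Tendsto (fun N : ℕ => ((E ∩ Set.Iio N).ncard : ℝ) / N) Filter.atTop (nhds 0)

private lemma aux_cont {X : Type*} [TopologicalSpace X] (T : X ≃ₜ X) (k : ℤ) :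
    Continuous fun x => ((T.toEquiv : Equiv.Perm X) ^ k) x := by
  induction k using Int.induction_on with
  | zero => simpa using continuous_id'
  | succ n ih =>
      have h : ∀ x : X, ((T.toEquiv : Equiv.Perm X) ^ ((n : ℤ) + 1)) x
          = ((T.toEquiv : Equiv.Perm X) ^ (n : ℤ)) (T x) := by
        intro x
        rw [zpow_add_one]
        rfl
      simp only [h]; exact ih.comp T.continuous
  | pred n ih =>
      have h : ∀ x : X, ((T.toEquiv : Equiv.Perm X) ^ (-(n : ℤ) - 1)) x
          = ((T.toEquiv : Equiv.Perm X) ^ (-(n : ℤ))) (T.symm x) := by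
        intro x
        rw [zpow_sub_one]
        rfl
      simp only [h]; exact ih.comp T.symm.continuous

/-- Let `(X, T)` be a totally minimal dynamical system on a nonempty
compact metrisable space, `A ⊆ X` neither empty nor dense with
`closure A = closure (interior A)`, and `z ∈ X`. If `f : ℕ → Bool` is such that
`{n : f n = true ↔ T^n z ∈ A}` is thick, then `f` is not weakly periodic. -/
theorem stmt_4 {X : Type*} [TopologicalSpace X] [CompactSpace X]
    [TopologicalSpace.MetrizableSpace X] [Nonempty X] (T : X ≃ₜ X)
    (hmin : ∀ n : ℕ, 1 ≤ n → ∀ x : X,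
      Dense (Set.range fun m : ℤ => ((T.toEquiv : Equiv.Perm X) ^ ((n : ℤ) * m)) x))
    (A : Set X) (hA₁ : A.Nonempty) (hA₂ : ¬ Dense A)
    (hA₃ : closure A = closure (interior A)) (z : X) (f : ℕ → Bool)
    (hf : Thick {n : ℕ | f n = true ↔ ((T.toEquiv : Equiv.Perm X) ^ n) z ∈ A}) :
    ¬ WeaklyPeriodic f := by
  intro hWP
  classical
  letI : MetricSpace X := TopologicalSpace.metrizableSpaceMetric X
  set Tp : Equiv.Perm X := (T.toEquiv : Equiv.Perm X) with hTpdef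
  have hcont : ∀ k : ℤ, Continuous fun x : X => (Tp ^ k) x := aux_cont T
  have hcomp : ∀ (a b : ℤ) (x : X), (Tp ^ a) ((Tp ^ b) x) = (Tp ^ (a + b)) x := by
    intro a b x
    rw [← Equiv.Perm.mul_apply, ← zpow_add]
  -- the open sets U and V
  set U : Set X := interior A with hUdef
  set V : Set X := (closure A)ᶜ with hVdef
  have hUopen : IsOpen U := isOpen_interior
  have hVopen : IsOpen V := isClosed_closure.isOpen_compl
  have hVne : V.Nonempty := by
    rw [hVdef, Set.nonempty_compl]
    intro h
    exact hA₂ (dense_iff_closure_eq.mpr h)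
  -- weak periodicity at a = 1, b = 0
  obtain ⟨q, r₀, r₀', hq, hne, hper₀⟩ := hWP 1 0 one_pos
  obtain ⟨r, d, hd, hper⟩ : ∃ r d : ℕ, 0 < d ∧
      ∀ n : ℕ, f (q * n + r) = f (q * n + (r + d)) := by
    rcases lt_or_gt_of_ne hne with h | h
    · refine ⟨r₀, r₀' - r₀, by omega, fun n => ?_⟩
      have h1 := hper₀ n
      simp only [one_mul, add_zero] at h1
      have h2 : r₀ + (r₀' - r₀) = r₀' := by omega
      rw [h2]
      exact h1
    · refine ⟨r₀', r₀ - r₀', by omega, fun n => ?_⟩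
      have h1 := hper₀ n
      simp only [one_mul, add_zero] at h1
      have h2 : r₀' + (r₀ - r₀') = r₀ := by omega
      rw [h2]
      exact h1.symm
  -- Step 2: W := U ∩ (Tp^d)⁻¹ V is nonempty
  set S : X → X := fun x => (Tp ^ (d : ℤ)) x with hSdef
  have hScont : Continuous S := hcont _
  set W : Set X := U ∩ S ⁻¹' V with hWdef
  have hWopen : IsOpen W := hUopen.inter (hVopen.preimage hScont)
  have hWne : W.Nonempty := by
    by_contra hW
    rw [Set.not_nonempty_iff_eq_empty] at hW
    have hstep : ∀ x ∈ U, S x ∈ closure A := by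
      intro x hx
      by_contra h
      have : x ∈ W := ⟨hx, h⟩
      rw [hW] at this
      exact this
    -- closure A is forward invariant
    have hCinv : S '' (closure A) ⊆ closure A := by
      have h1 : S '' (closure U) ⊆ closure (S '' U) :=
        image_closure_subset_closure_image hScont
      have h2 : S '' U ⊆ closure A := fun w ⟨u, hu, huw⟩ => huw ▸ hstep u hu
      calc S '' (closure A) = S '' (closure U) := by rw [hA₃]
        _ ⊆ closure (S '' U) := h1
        _ ⊆ closure (closure A) := closure_mono h2
        _ = closure A := closure_closure
    have hCA : (closure A).Nonempty := hA₁.mono subset_closure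
    have hSiter : ∀ (k : ℕ) (x : X), S^[k] x = (Tp ^ ((d : ℤ) * k)) x := by
      intro k
      induction k with
      | zero => intro x; simp
      | succ k ih =>
          intro x
          rw [Function.iterate_succ', Function.comp_apply, ih]
          show (Tp ^ ((d : ℤ))) ((Tp ^ ((d : ℤ) * (k : ℕ))) x) = (Tp ^ ((d : ℤ) * ((k + 1 : ℕ) : ℤ))) x
          rw [hcomp]
          congr 1
          push_cast
          ring_nf
    have hSiterC : ∀ k : ℕ, S^[k] '' (closure A) ⊆ closure A := by
      intro k
      induction k with
      | zero => simp
      | succ k ih =>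
          rw [Function.iterate_succ, Set.image_comp]
          exact (Set.image_mono hCinv).trans ih
    -- Cantor intersection
    have hnon : (⋂ k : ℕ, S^[k] '' (closure A)).Nonempty := by
      apply IsCompact.nonempty_iInter_of_sequence_nonempty_isCompact_isClosed
      · intro i
        rw [Function.iterate_succ, Set.image_comp]
        exact Set.image_mono hCinv
      · intro i
        exact hCA.image _
      · simp only [Function.iterate_zero, Set.image_id]
        exact isClosed_closure.isCompact
      · intro i
        exact (isClosed_closure.isCompact.image (hScont.iterate i)).isClosed
    obtain ⟨x₀, hx₀⟩ := hnon
    simp only [Set.mem_iInter] at hx₀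
    -- all powers of Tp^d at x₀ stay in closure A
    have horb : ∀ m : ℤ, (Tp ^ ((d : ℤ) * m)) x₀ ∈ closure A := by
      intro m
      obtain ⟨k, hk | hk⟩ := m.eq_nat_or_neg
      · subst hk
        have h0 : x₀ ∈ closure A := by simpa using hx₀ 0
        have : S^[k] x₀ ∈ closure A := hSiterC k ⟨x₀, h0, rfl⟩
        rwa [hSiter k x₀] at this
      · subst hk
        obtain ⟨c, hc, hck⟩ := hx₀ k
        have heq : (Tp ^ ((d : ℤ) * (-(k : ℤ)))) x₀ = c := by
          rw [← hck, hSiter k c, hcomp]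
          have h0 : (d : ℤ) * (-(k : ℤ)) + (d : ℤ) * (k : ℤ) = 0 := by ring
          rw [h0]
          simp
        rw [heq]
        exact hc
    -- density of the orbit gives closure A = univ
    have hdense := hmin d hd x₀
    have hsub : Set.range (fun m : ℤ => (Tp ^ ((d : ℤ) * m)) x₀) ⊆ closure A := by
      rintro w ⟨m, rfl⟩
      exact horb m
    have : closure A = Set.univ := by
      apply Set.eq_univ_of_univ_subset
      calc Set.univ = closure (Set.range (fun m : ℤ => (Tp ^ ((d : ℤ) * m)) x₀)) :=
            (dense_iff_closure_eq.mp hdense).symm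
        _ ⊆ closure (closure A) := closure_mono hsub
        _ = closure A := closure_closure
    exact hA₂ (dense_iff_closure_eq.mpr this)
  -- Step 3: thickness construction
  have hlen : ∀ L : ℕ, ∃ a : ℕ, ∀ i < 2 * q * L + q + r + d + 1,
      a + i ∈ {n : ℕ | f n = true ↔ (Tp ^ n) z ∈ A} := fun L => hf _
  choose a ha using hlen
  set m : ℕ → ℕ := fun L => q * ((a L + q * L) / q + 1) + r with hmdef
  set x : ℕ → X := fun L => (Tp ^ ((m L : ℤ))) z with hxdef
  have hkey : ∀ (L : ℕ) (n : ℤ), |n| ≤ (L : ℤ) →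
      ((Tp ^ ((q : ℤ) * n)) (x L) ∈ A ↔ (Tp ^ ((q : ℤ) * n + (d : ℤ))) (x L) ∈ A) := by
    intro L n hn
    rw [abs_le] at hn
    have hmemR : ∀ N : ℕ, a L ≤ N → N < a L + (2 * q * L + q + r + d + 1) →
        (f N = true ↔ (Tp ^ N) z ∈ A) := by
      intro N h1 h2
      have h3 := ha L (N - a L) (by omega)
      have h4 : a L + (N - a L) = N := by omega
      rwa [h4] at h3
    -- division facts
    have hdm := Nat.div_add_mod (a L + q * L) q
    have hmod : (a L + q * L) % q < q := Nat.mod_lt _ hq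
    have hDL : L ≤ (a L + q * L) / q := by
      have h1 : q * L / q ≤ (a L + q * L) / q := Nat.div_le_div_right (Nat.le_add_left _ _)
      rwa [Nat.mul_div_cancel_left L hq] at h1
    set D : ℕ := (a L + q * L) / q with hDdef
    have hmval : m L = q * D + q + r := by
      rw [show m L = q * (D + 1) + r from rfl]
      ring
    -- m L bounds
    have hmL1 : a L + q * L < m L := by
      rw [hmval]
      calc a L + q * L = q * D + (a L + q * L) % q := hdm.symm
        _ < q * D + q := Nat.add_lt_add_left hmod _
        _ ≤ q * D + q + r := Nat.le_add_right _ _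
    have hmL2 : m L ≤ a L + q * L + q + r := by
      rw [hmval]
      have h1 : q * D ≤ a L + q * L :=
        le_trans (Nat.le_add_right _ _) (le_of_eq hdm)
      exact Nat.add_le_add_right (Nat.add_le_add_right h1 q) r
    have hk0 : (0 : ℤ) ≤ (D : ℤ) + 1 + n := by omega
    set k' : ℕ := ((D : ℤ) + 1 + n).toNat with hk'def
    have hkk' : (k' : ℤ) = (D : ℤ) + 1 + n := Int.toNat_of_nonneg hk0
    have hm' : (m L : ℤ) = (q : ℤ) * ((D : ℤ) + 1) + (r : ℤ) := by
      rw [hmval]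
      push_cast
      ring
    have hid : (m L : ℤ) + (q : ℤ) * n = (q : ℤ) * (k' : ℤ) + (r : ℤ) := by
      rw [hkk', hm']
      ring
    -- bounds for the two indices
    have hqn1 : 0 ≤ (q : ℤ) * ((n : ℤ) + (L : ℤ)) :=
      mul_nonneg (by positivity) (by omega)
    have hqn2 : 0 ≤ (q : ℤ) * ((L : ℤ) - n) :=
      mul_nonneg (by positivity) (by omega)
    have hexp1 : (q : ℤ) * ((n : ℤ) + (L : ℤ)) = (q : ℤ) * n + (q : ℤ) * (L : ℤ) := by ring
    have hexp2 : (q : ℤ) * ((L : ℤ) - n) = (q : ℤ) * (L : ℤ) - (q : ℤ) * n := by ring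
    have hb1 : a L ≤ q * k' + r := by
      have h2 : (a L : ℤ) + (q : ℤ) * (L : ℤ) < (m L : ℤ) := by exact_mod_cast hmL1
      have h1 : (a L : ℤ) ≤ (q : ℤ) * (k' : ℤ) + (r : ℤ) := by
        linarith [hid, h2, hexp1, hqn1]
      exact_mod_cast h1
    have hb2 : q * k' + (r + d) < a L + (2 * q * L + q + r + d + 1) := by
      have h2 : (m L : ℤ) ≤ (a L : ℤ) + (q : ℤ) * (L : ℤ) + (q : ℤ) + (r : ℤ) := by
        exact_mod_cast hmL2
      have h1 : (q : ℤ) * (k' : ℤ) + ((r : ℤ) + (d : ℤ)) <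
          (a L : ℤ) + (2 * ((q : ℤ) * (L : ℤ)) + (q : ℤ) + (r : ℤ) + (d : ℤ) + 1) := by
        linarith [hid, h2, hexp2, hqn2]
      have h3 : (q * k' + (r + d) : ℤ) <
          ((a L + (2 * q * L + q + r + d + 1) : ℕ) : ℤ) := by
        push_cast
        linarith [h1]
      exact_mod_cast h3
    have hb1' : a L ≤ q * k' + (r + d) :=
      le_trans hb1 (Nat.add_le_add_left (Nat.le_add_right _ _) _)
    have hb2' : q * k' + r < a L + (2 * q * L + q + r + d + 1) :=
      lt_of_le_of_lt (Nat.add_le_add_left (Nat.le_add_right _ _) _) hb2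
    have hg1 := hmemR (q * k' + r) hb1 hb2'
    have hg2 := hmemR (q * k' + (r + d)) hb1' hb2
    have hfN : f (q * k' + r) = f (q * k' + (r + d)) := hper k'
    have hiff : ((Tp ^ (q * k' + r)) z ∈ A) ↔ ((Tp ^ (q * k' + (r + d))) z ∈ A) := by
      constructor
      · intro h; exact hg2.mp (by rw [← hfN]; exact hg1.mpr h)
      · intro h; exact hg1.mp (by rw [hfN]; exact hg2.mpr h)
    have he1 : (Tp ^ ((q : ℤ) * n)) (x L) = (Tp ^ (q * k' + r)) z := by
      show (Tp ^ ((q : ℤ) * n)) ((Tp ^ ((m L : ℤ))) z) = (Tp ^ (q * k' + r)) z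
      rw [hcomp]
      have h5 : (q : ℤ) * n + (m L : ℤ) = ((q * k' + r : ℕ) : ℤ) := by
        push_cast
        linarith [hid]
      rw [h5, zpow_natCast]
    have he2 : (Tp ^ ((q : ℤ) * n + (d : ℤ))) (x L) = (Tp ^ (q * k' + (r + d))) z := by
      show (Tp ^ ((q : ℤ) * n + (d : ℤ))) ((Tp ^ ((m L : ℤ))) z) = (Tp ^ (q * k' + (r + d))) z
      rw [hcomp]
      have h5 : (q : ℤ) * n + (d : ℤ) + (m L : ℤ) = ((q * k' + (r + d) : ℕ) : ℤ) := by
        push_cast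
        linarith [hid]
      rw [h5, zpow_natCast]
    rw [he1, he2]
    exact hiff
  -- extract a convergent subsequence
  obtain ⟨y, -, φ, hφ, hconv⟩ := isCompact_univ.tendsto_subseq (x := x)
    (fun L => Set.mem_univ (x L))
  -- density of the T^q orbit of y meets W
  have hdenseq := hmin q hq y
  obtain ⟨p, hpW, hpr⟩ := hdenseq.inter_open_nonempty W hWopen hWne
  obtain ⟨n₀, rfl⟩ := hpr
  have hyU : (Tp ^ ((q : ℤ) * n₀)) y ∈ U := hpW.1
  have hyV : (Tp ^ ((q : ℤ) * n₀ + (d : ℤ))) y ∈ V := by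
    have h1 : (Tp ^ ((d : ℤ))) ((Tp ^ ((q : ℤ) * n₀)) y) ∈ V := hpW.2
    rw [hcomp] at h1
    have h2 : (d : ℤ) + (q : ℤ) * n₀ = (q : ℤ) * n₀ + (d : ℤ) := by ring
    rwa [h2] at h1
  -- eventual membership
  have hc1 : Tendsto (fun j => (Tp ^ ((q : ℤ) * n₀)) (x (φ j))) atTop
      (𝓝 ((Tp ^ ((q : ℤ) * n₀)) y)) := ((hcont _).tendsto y).comp hconv
  have hc2 : Tendsto (fun j => (Tp ^ ((q : ℤ) * n₀ + (d : ℤ))) (x (φ j))) atTop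
      (𝓝 ((Tp ^ ((q : ℤ) * n₀ + (d : ℤ))) y)) := ((hcont _).tendsto y).comp hconv
  have e1 : ∀ᶠ j in atTop, (Tp ^ ((q : ℤ) * n₀)) (x (φ j)) ∈ U :=
    hc1 (hUopen.mem_nhds hyU)
  have e2 : ∀ᶠ j in atTop, (Tp ^ ((q : ℤ) * n₀ + (d : ℤ))) (x (φ j)) ∈ V :=
    hc2 (hVopen.mem_nhds hyV)
  have e3 : ∀ᶠ j in atTop, |n₀| ≤ ((φ j : ℕ) : ℤ) := by
    filter_upwards [eventually_ge_atTop n₀.natAbs] with j hj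
    have h0 : n₀.natAbs ≤ φ j := le_trans hj hφ.le_apply
    calc |n₀| = (n₀.natAbs : ℤ) := Int.abs_eq_natAbs n₀
      _ ≤ ((φ j : ℕ) : ℤ) := by exact_mod_cast h0
  obtain ⟨j, h1, h2, h3⟩ := (e1.and (e2.and e3)).exists
  have hA' : (Tp ^ ((q : ℤ) * n₀)) (x (φ j)) ∈ A := interior_subset h1
  have hA'' : (Tp ^ ((q : ℤ) * n₀ + (d : ℤ))) (x (φ j)) ∈ A := (hkey (φ j) n₀ h3).mp hA'
  exact h2 (subset_closure hA'')
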